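/- Suppose for every t ≥ 1 the Loewner inequality (F_t − I) R_t⁻¹ (F_t − I) ≼ (L_t P_{t−1} L_tᵀ + R_t)⁻¹ holds, and suppose there exists q > 0 such that G_tᵀ P_{t−1}⁻¹ G_t ≼ P_{t−1}⁻¹ − q·I for every t ≥ 1. Let θ* ∈ ℝ^p, define the parameter estimates θ̂_t := θ* − θ̃_t, and let ℒ : ℝ^p → ℝ be any continuous function with ℒ(θ*) = 0. Then the cumulative loss along the estimates converges to zero: ℒ(θ̂_t) → 0 as t → ∞. -/

import Mathlib

open Matrix

private lemma quad_nonneg' {n : ℕ} {M : Matrix (Fin n) (Fin n) ℝ} (h : M.PosSemidef)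
    (x : Fin n → ℝ) : 0 ≤ x ⬝ᵥ M *ᵥ x := by simpa using h.dotProduct_mulVec_nonneg x

private lemma dot_swap' {m n : ℕ} (M : Matrix (Fin m) (Fin n) ℝ) (x : Fin m → ℝ)
    (y : Fin n → ℝ) : x ⬝ᵥ M *ᵥ y = (Mᵀ *ᵥ x) ⬝ᵥ y := by
  rw [Matrix.dotProduct_mulVec, Matrix.mulVec_transpose]

private lemma symm_of_posdef' {n : ℕ} {M : Matrix (Fin n) (Fin n) ℝ} (h : M.PosDef) :
    Mᵀ = M := by
  rw [← Matrix.conjTranspose_eq_transpose_of_trivial]; exact h.isHermitian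

private lemma ring_id1' {A : Type*} [Ring A] (S R Si : A) (h1 : S * Si = 1) (h2 : Si * S = 1) :
    (S - R) - (S - R) * Si * (S - R) = R - R * Si * R := by
  have h3 : (S - R) * Si = 1 - R * Si := by rw [sub_mul, h1]
  rw [h3, sub_mul, one_mul, mul_sub, mul_assoc R Si S, h2, mul_one]
  abel

private lemma ring_id2' {A : Type*} [Ring A] (R Ri Si : A) (h1 : R * Ri = 1) (h2 : Ri * R = 1) :
    Ri * (R - R * Si * R) * Ri = Ri - Si := by
  have a : Ri * (R * Si * R) = Si * R := by
    rw [← mul_assoc, ← mul_assoc, h2, one_mul]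
  rw [mul_sub, a, h2, sub_mul, one_mul, mul_assoc, h1, mul_one]

theorem ekf_key
    (p r : ℕ)
    (R : ℕ → Matrix (Fin r) (Fin r) ℝ) (L : ℕ → Matrix (Fin r) (Fin p) ℝ)
    (F : ℕ → Matrix (Fin r) (Fin r) ℝ) (G : ℕ → Matrix (Fin p) (Fin p) ℝ)
    (hRpos : ∀ t : ℕ, (R (t + 1)).PosDef)
    (hRsymm : ∀ t : ℕ, (R (t + 1)).IsSymm)
    (hFsymm : ∀ t : ℕ, (F (t + 1)).IsSymm)
    (P : ℕ → Matrix (Fin p) (Fin p) ℝ)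
    (hPrec : ∀ t : ℕ,
      P (t + 1) =
        (1 - (P t * (L (t + 1))ᵀ * (L (t + 1) * P t * (L (t + 1))ᵀ + R (t + 1))⁻¹) * L (t + 1)) *
          P t)
    (hPpos : ∀ t : ℕ, (P t).PosDef)
    (hPinv : ∀ t : ℕ,
      (P (t + 1))⁻¹ = (P t)⁻¹ + (L (t + 1))ᵀ * (R (t + 1))⁻¹ * L (t + 1))
    (θ : ℕ → Fin p → ℝ) (e : ℕ → Fin r → ℝ)
    (hθ : ∀ t : ℕ,
      θ (t + 1) = G (t + 1) *ᵥ θ t - (P (t + 1) * (L (t + 1))ᵀ * (R (t + 1))⁻¹) *ᵥ e (t + 1))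
    (hFe : ∀ t : ℕ, F (t + 1) *ᵥ e (t + 1) = L (t + 1) *ᵥ (G (t + 1) *ᵥ θ t))
    (hLoew1 : ∀ t : ℕ,
      ((L (t + 1) * P t * (L (t + 1))ᵀ + R (t + 1))⁻¹ -
        (F (t + 1) - 1) * (R (t + 1))⁻¹ * (F (t + 1) - 1)).PosSemidef)
    (q : ℝ) (hq : 0 < q)
    (hLoew2 : ∀ t : ℕ,
      (((P t)⁻¹ - q • (1 : Matrix (Fin p) (Fin p) ℝ)) -
        (G (t + 1))ᵀ * (P t)⁻¹ * G (t + 1)).PosSemidef)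
    (t : ℕ) :
    θ (t+1) ⬝ᵥ (P (t+1))⁻¹ *ᵥ θ (t+1) + q * (θ t ⬝ᵥ θ t) ≤ θ t ⬝ᵥ (P t)⁻¹ *ᵥ θ t := by
  have hR := hRpos t
  have hPt := hPpos t
  have hPn := hPpos (t+1)
  have hPr := hPrec t
  have hPi := hPinv t
  have hθt := hθ t
  have hFet := hFe t
  have hL1 := hLoew1 t
  have hL2 := hLoew2 t
  have tR : (R (t+1))ᵀ = R (t+1) := hRsymm t
  have tF : (F (t+1))ᵀ = F (t+1) := hFsymm t
  clear hRpos hPpos hPrec hPinv hθ hFe hLoew1 hLoew2 hRsymm hFsymm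
  set Lm := L (t+1) with hLmdef
  set Rm := R (t+1) with hRmdef
  set Fm := F (t+1) with hFmdef
  set Gm := G (t+1) with hGmdef
  set Pt := P t with hPtdef
  set Pn := P (t+1) with hPndef
  set S := Lm * Pt * Lmᵀ + Rm with hSdef
  -- S pos def
  have hS : S.PosDef := by
    have h1 : (Lm * Pt * Lmᵀ).PosSemidef := by
      have := (hPt.posSemidef).mul_mul_conjTranspose_same Lm
      rwa [Matrix.conjTranspose_eq_transpose_of_trivial] at this
    exact Matrix.PosDef.posSemidef_add h1 hR
  -- invertibility
  have hRd : IsUnit Rm.det := (Matrix.isUnit_iff_isUnit_det _).1 hR.isUnit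
  have hSd : IsUnit S.det := (Matrix.isUnit_iff_isUnit_det _).1 hS.isUnit
  have hPnd : IsUnit Pn.det := (Matrix.isUnit_iff_isUnit_det _).1 hPn.isUnit
  have hRR : Rm * Rm⁻¹ = 1 := Matrix.mul_nonsing_inv _ hRd
  have hRR' : Rm⁻¹ * Rm = 1 := Matrix.nonsing_inv_mul _ hRd
  have hSS : S * S⁻¹ = 1 := Matrix.mul_nonsing_inv _ hSd
  have hSS' : S⁻¹ * S = 1 := Matrix.nonsing_inv_mul _ hSd
  have hPP : Pn * Pn⁻¹ = 1 := Matrix.mul_nonsing_inv _ hPnd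
  have hPP' : Pn⁻¹ * Pn = 1 := Matrix.nonsing_inv_mul _ hPnd
  -- symmetry facts
  have tPn : Pnᵀ = Pn := symm_of_posdef' hPn
  have tRi : (Rm⁻¹)ᵀ = Rm⁻¹ := by rw [Matrix.transpose_nonsing_inv, tR]
  -- key matrix identity : Lm * Pn * Lmᵀ = Rm - Rm * S⁻¹ * Rm
  have hB : Lm * Pt * Lmᵀ = S - Rm := by rw [hSdef, add_sub_cancel_right]
  have e1 : Lm * Pn * Lmᵀ = (Lm * Pt * Lmᵀ) - (Lm * Pt * Lmᵀ) * S⁻¹ * (Lm * Pt * Lmᵀ) := by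
    rw [hPr]
    simp only [Matrix.sub_mul, Matrix.mul_sub, Matrix.one_mul, Matrix.mul_one, Matrix.mul_assoc]
  have e2 : Lm * Pn * Lmᵀ = Rm - Rm * S⁻¹ * Rm := by
    rw [e1, hB, ring_id1' S Rm S⁻¹ hSS hSS']
  have e3 : Rm⁻¹ * (Lm * Pn * Lmᵀ) * Rm⁻¹ = Rm⁻¹ - S⁻¹ := by
    rw [e2, ring_id2' Rm Rm⁻¹ S⁻¹ hRR hRR']
  -- abbreviations for vectors
  set x := Gm *ᵥ θ t with hxdef
  set ev := e (t+1) with hevdef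
  set K := Pn * Lmᵀ * Rm⁻¹ with hKdef
  have hKT : Kᵀ = Rm⁻¹ * Lm * Pn := by
    rw [hKdef, Matrix.transpose_mul, Matrix.transpose_mul, Matrix.transpose_transpose, tRi, tPn,
      Matrix.mul_assoc]
  have hLx : Lm *ᵥ x = Fm *ᵥ ev := hFet.symm
  have hPK : Pn⁻¹ * K = Lmᵀ * Rm⁻¹ := by
    rw [hKdef, ← Matrix.mul_assoc, ← Matrix.mul_assoc, hPP', Matrix.one_mul]
  have hKP : Kᵀ * Pn⁻¹ = Rm⁻¹ * Lm := by
    rw [hKT, Matrix.mul_assoc, hPP, Matrix.mul_one]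
  -- the four terms
  have hT2 : x ⬝ᵥ Pn⁻¹ *ᵥ (K *ᵥ ev) = (Fm *ᵥ ev) ⬝ᵥ Rm⁻¹ *ᵥ ev := by
    rw [Matrix.mulVec_mulVec, hPK, ← Matrix.mulVec_mulVec, dot_swap',
      Matrix.transpose_transpose, hLx]
  have hswap : ∀ w : Fin r → ℝ, ev ⬝ᵥ Rm⁻¹ *ᵥ w = w ⬝ᵥ Rm⁻¹ *ᵥ ev := by
    intro w
    rw [dot_swap', tRi, dotProduct_comm]
  have hT3 : (K *ᵥ ev) ⬝ᵥ Pn⁻¹ *ᵥ x = (Fm *ᵥ ev) ⬝ᵥ Rm⁻¹ *ᵥ ev := by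
    have h0 : (K *ᵥ ev) ⬝ᵥ (Pn⁻¹ *ᵥ x) = ev ⬝ᵥ Kᵀ *ᵥ (Pn⁻¹ *ᵥ x) := by
      rw [dot_swap' Kᵀ ev, Matrix.transpose_transpose]
    rw [h0, Matrix.mulVec_mulVec, hKP, ← Matrix.mulVec_mulVec, hLx, hswap]
  have hT4 : (K *ᵥ ev) ⬝ᵥ Pn⁻¹ *ᵥ (K *ᵥ ev) = ev ⬝ᵥ (Rm⁻¹ - S⁻¹) *ᵥ ev := by
    have h0 : (K *ᵥ ev) ⬝ᵥ (Pn⁻¹ *ᵥ (K *ᵥ ev)) = ev ⬝ᵥ Kᵀ *ᵥ (Pn⁻¹ *ᵥ (K *ᵥ ev)) := by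
      rw [dot_swap' Kᵀ ev, Matrix.transpose_transpose]
    have h4 : Rm⁻¹ * Lm * K = Rm⁻¹ - S⁻¹ := by
      rw [hKdef, ← e3]
      simp only [Matrix.mul_assoc]
    rw [h0, Matrix.mulVec_mulVec, hKP, Matrix.mulVec_mulVec, h4]
  have hT1 : x ⬝ᵥ Pn⁻¹ *ᵥ x
      = x ⬝ᵥ Pt⁻¹ *ᵥ x + (Fm *ᵥ ev) ⬝ᵥ Rm⁻¹ *ᵥ (Fm *ᵥ ev) := by
    rw [hPi, Matrix.add_mulVec, dotProduct_add]
    congr 1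
    rw [← Matrix.mulVec_mulVec, ← Matrix.mulVec_mulVec, dot_swap',
      Matrix.transpose_transpose, hLx]
  -- cross-term identity
  have hu : (Fm - 1) *ᵥ ev = Fm *ᵥ ev - ev := by
    rw [Matrix.sub_mulVec, Matrix.one_mulVec]
  have tF1 : (Fm - 1)ᵀ = Fm - 1 := by rw [Matrix.transpose_sub, Matrix.transpose_one, tF]
  have hcross : ev ⬝ᵥ ((Fm - 1) * Rm⁻¹ * (Fm - 1)) *ᵥ ev
      = (Fm *ᵥ ev) ⬝ᵥ Rm⁻¹ *ᵥ (Fm *ᵥ ev) - 2 * ((Fm *ᵥ ev) ⬝ᵥ Rm⁻¹ *ᵥ ev)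
        + ev ⬝ᵥ Rm⁻¹ *ᵥ ev := by
    rw [← Matrix.mulVec_mulVec, ← Matrix.mulVec_mulVec, dot_swap', tF1, hu,
      Matrix.mulVec_sub, sub_dotProduct, dotProduct_sub,
      dotProduct_sub, hswap (Fm *ᵥ ev)]
    ring
  -- assemble V
  have hV : θ (t+1) ⬝ᵥ Pn⁻¹ *ᵥ θ (t+1)
      = x ⬝ᵥ Pt⁻¹ *ᵥ x - ev ⬝ᵥ (S⁻¹ - (Fm - 1) * Rm⁻¹ * (Fm - 1)) *ᵥ ev := by
    rw [hθt, Matrix.mulVec_sub, sub_dotProduct, dotProduct_sub,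
      dotProduct_sub, hT1, hT2, hT3, hT4, Matrix.sub_mulVec, dotProduct_sub,
      Matrix.sub_mulVec, dotProduct_sub, hcross]
    ring
  have hpos1 : 0 ≤ ev ⬝ᵥ (S⁻¹ - (Fm - 1) * Rm⁻¹ * (Fm - 1)) *ᵥ ev := quad_nonneg' hL1 ev
  have hG : x ⬝ᵥ Pt⁻¹ *ᵥ x = θ t ⬝ᵥ (Gmᵀ * Pt⁻¹ * Gm) *ᵥ θ t := by
    rw [← Matrix.mulVec_mulVec, ← Matrix.mulVec_mulVec, dot_swap' Gmᵀ,
      Matrix.transpose_transpose]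
  have hpos2 : 0 ≤ θ t ⬝ᵥ ((Pt⁻¹ - q • 1) - Gmᵀ * Pt⁻¹ * Gm) *ᵥ θ t := quad_nonneg' hL2 (θ t)
  have hexp : θ t ⬝ᵥ ((Pt⁻¹ - q • 1) - Gmᵀ * Pt⁻¹ * Gm) *ᵥ θ t
      = θ t ⬝ᵥ Pt⁻¹ *ᵥ θ t - q * (θ t ⬝ᵥ θ t) - θ t ⬝ᵥ (Gmᵀ * Pt⁻¹ * Gm) *ᵥ θ t := by
    rw [Matrix.sub_mulVec, dotProduct_sub, Matrix.sub_mulVec, dotProduct_sub,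
      Matrix.smul_mulVec, Matrix.one_mulVec, dotProduct_smul, smul_eq_mul]
  rw [hV, hG]
  rw [hexp] at hpos2
  linarith
/-- Convergence of the cumulative loss along the EKF parameter estimates: under the Loewner
conditions with a margin `q > 0`, for any continuous loss `ℒ` with `ℒ(θ*) = 0`, the loss
along the estimates `θ̂_t := θ* − θ̃_t` converges to zero.
(Quantities at time `t ≥ 1` are indexed with argument `t+1`, `t : ℕ`.) -/
theorem ekf_cumulative_loss_convergence
    (p r : ℕ) (hp : 0 < p) (hr : 0 < r)
    (R : ℕ → Matrix (Fin r) (Fin r) ℝ) (L : ℕ → Matrix (Fin r) (Fin p) ℝ)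
    (F : ℕ → Matrix (Fin r) (Fin r) ℝ) (G : ℕ → Matrix (Fin p) (Fin p) ℝ)
    (hRpos : ∀ t : ℕ, (R (t + 1)).PosDef)
    (hRsymm : ∀ t : ℕ, (R (t + 1)).IsSymm)
    (hFsymm : ∀ t : ℕ, (F (t + 1)).IsSymm)
    (P : ℕ → Matrix (Fin p) (Fin p) ℝ)
    (hP0 : (P 0).PosDef)
    (hPrec : ∀ t : ℕ,
      P (t + 1) =
        (1 - (P t * (L (t + 1))ᵀ * (L (t + 1) * P t * (L (t + 1))ᵀ + R (t + 1))⁻¹) * L (t + 1)) *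
          P t)
    (hPpos : ∀ t : ℕ, (P t).PosDef)
    (hPinv : ∀ t : ℕ,
      (P (t + 1))⁻¹ = (P t)⁻¹ + (L (t + 1))ᵀ * (R (t + 1))⁻¹ * L (t + 1))
    (θ : ℕ → Fin p → ℝ) (e : ℕ → Fin r → ℝ)
    (hθ : ∀ t : ℕ,
      θ (t + 1) = G (t + 1) *ᵥ θ t - (P (t + 1) * (L (t + 1))ᵀ * (R (t + 1))⁻¹) *ᵥ e (t + 1))
    (hFe : ∀ t : ℕ, F (t + 1) *ᵥ e (t + 1) = L (t + 1) *ᵥ (G (t + 1) *ᵥ θ t))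
    (hLoew1 : ∀ t : ℕ,
      ((L (t + 1) * P t * (L (t + 1))ᵀ + R (t + 1))⁻¹ -
        (F (t + 1) - 1) * (R (t + 1))⁻¹ * (F (t + 1) - 1)).PosSemidef)
    (q : ℝ) (hq : 0 < q)
    (hLoew2 : ∀ t : ℕ,
      (((P t)⁻¹ - q • (1 : Matrix (Fin p) (Fin p) ℝ)) -
        (G (t + 1))ᵀ * (P t)⁻¹ * G (t + 1)).PosSemidef)
    (θstar : Fin p → ℝ)
    (θhat : ℕ → Fin p → ℝ) (hθhat : ∀ t : ℕ, θhat t = θstar - θ t)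
    (Loss : (Fin p → ℝ) → ℝ) (hLcont : Continuous Loss) (hL0 : Loss θstar = 0) :
    Filter.Tendsto (fun t : ℕ => Loss (θhat t)) Filter.atTop (nhds 0) := by
  have key := fun t => ekf_key p r R L F G hRpos hRsymm hFsymm P hPrec hPpos hPinv θ e hθ hFe
    hLoew1 q hq hLoew2 t
  set V : ℕ → ℝ := fun t => θ t ⬝ᵥ (P t)⁻¹ *ᵥ θ t with hVdef
  have hVnn : ∀ t, 0 ≤ V t := fun t => quad_nonneg' ((hPpos t).inv).posSemidef _
  have hdnn : ∀ t, 0 ≤ θ t ⬝ᵥ θ t := by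
    intro t
    simp only [dotProduct]
    exact Finset.sum_nonneg fun i _ => mul_self_nonneg _
  have hsum : ∀ n, (∑ i ∈ Finset.range n, q * (θ i ⬝ᵥ θ i)) + V n ≤ V 0 := by
    intro n
    induction n with
    | zero => simp
    | succ n ih =>
      rw [Finset.sum_range_succ]
      have := key n
      simp only [hVdef] at ih ⊢
      linarith
  have hsummable : Summable (fun t => q * (θ t ⬝ᵥ θ t)) := by
    apply summable_of_sum_range_le (c := V 0) (fun n => mul_nonneg hq.le (hdnn n))
    intro n
    have h1 := hsum n
    have h2 := hVnn n
    linarith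
  have hq0 : Filter.Tendsto (fun t => q * (θ t ⬝ᵥ θ t)) Filter.atTop (nhds 0) :=
    hsummable.tendsto_atTop_zero
  have hdot0 : Filter.Tendsto (fun t => θ t ⬝ᵥ θ t) Filter.atTop (nhds 0) := by
    have := hq0.const_mul q⁻¹
    simpa [← mul_assoc, inv_mul_cancel₀ hq.ne'] using this
  have hsqrt0 : Filter.Tendsto (fun t => Real.sqrt (θ t ⬝ᵥ θ t)) Filter.atTop (nhds 0) := by
    have := (Real.continuous_sqrt.tendsto 0).comp hdot0
    simpa [Function.comp_def] using this
  have hθ0 : Filter.Tendsto θ Filter.atTop (nhds 0) := by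
    apply squeeze_zero_norm _ hsqrt0
    intro n
    rw [pi_norm_le_iff_of_nonneg (Real.sqrt_nonneg _)]
    intro i
    rw [Real.norm_eq_abs, ← Real.sqrt_sq_eq_abs]
    apply Real.sqrt_le_sqrt
    have hle : θ n i * θ n i ≤ θ n ⬝ᵥ θ n := by
      simp only [dotProduct]
      exact Finset.single_le_sum (f := fun j => θ n j * θ n j)
        (fun j _ => mul_self_nonneg _) (Finset.mem_univ i)
    rw [pow_two]
    exact hle
  have hhat : Filter.Tendsto θhat Filter.atTop (nhds θstar) := by
    have hfun : θhat = fun t => θstar - θ t := funext hθhat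
    rw [hfun]
    simpa using Filter.Tendsto.sub (tendsto_const_nhds (x := θstar)) hθ0
  have := (hLcont.tendsto θstar).comp hhat
  simpa [hL0, Function.comp_def] using this
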